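/- Let 0 < s < b, let x = (b cos θ, b sin θ) and y = (s cos θ_y, s sin θ_y) be points of ℝ². Then the series Σ_{m=1}^∞ (1/m)(s/b)^m cos m(θ − θ_y) converges and log|x − y| = log b − Σ_{m=1}^∞ (1/m)(s/b)^m cos m(θ − θ_y). -/

import Mathlib

/-- Let `0 < s < b`, `x = (b cos θ, b sin θ)`, `y = (s cos θ_y, s sin θ_y)` in `ℝ²`.
Then `Σ_{m=1}^∞ (1/m)(s/b)^m cos m(θ - θ_y)` converges and
`log ‖x - y‖ = log b - Σ_{m=1}^∞ (1/m)(s/b)^m cos m(θ - θ_y)`. -/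
theorem log_dist_expansion_outer_circle (b s θ θy : ℝ) (hs : 0 < s) (hsb : s < b)
    (x y : EuclideanSpace ℝ (Fin 2))
    (hx : x = ![b * Real.cos θ, b * Real.sin θ])
    (hy : y = ![s * Real.cos θy, s * Real.sin θy]) :
    HasSum (fun m : ℕ => (1 / (m + 1 : ℝ)) * (s / b) ^ (m + 1) * Real.cos ((m + 1) * (θ - θy)))
      (Real.log b - Real.log ‖x - y‖) := by
  have hb : (0:ℝ) < b := hs.trans hsb
  set φ := θ - θy with hφ
  set z : ℂ := (s / b : ℝ) * Complex.exp (φ * Complex.I) with hz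
  have hznorm : ‖z‖ < 1 := by
    rw [hz, norm_mul]
    simp only [Complex.norm_real, Real.norm_eq_abs, Complex.norm_exp_ofReal_mul_I, mul_one]
    rw [abs_of_pos (div_pos hs hb), div_lt_one hb]
    exact hsb
  have h1 := Complex.hasSum_taylorSeries_neg_log hznorm
  have h2 : HasSum (fun n : ℕ => z ^ (n + 1) / (n + 1)) (-Complex.log (1 - z)) := by
    have := (hasSum_nat_add_iff' (f := fun n : ℕ => z ^ n / n) 1).2 h1
    simpa using this
  have h3 := h2.mapL Complex.reCLM
  have hterm : ∀ n : ℕ, Complex.reCLM (z ^ (n + 1) / ((n : ℂ) + 1))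
      = (1 / (n + 1 : ℝ)) * (s / b) ^ (n + 1) * Real.cos ((n + 1) * φ) := by
    intro n
    have hzpow : z ^ (n + 1)
        = (((s / b : ℝ) ^ (n + 1) : ℝ) : ℂ) * Complex.exp ((((n + 1 : ℝ)) * φ : ℝ) * Complex.I) := by
      rw [hz, mul_pow, ← Complex.exp_nat_mul]
      push_cast
      ring_nf
    have hdiv : z ^ (n + 1) / ((n : ℂ) + 1)
        = ((((n : ℝ) + 1)⁻¹ : ℝ) : ℂ) * z ^ (n + 1) := by
      push_cast
      have : ((n : ℂ) + 1) ≠ 0 := Nat.cast_add_one_ne_zero n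
      field_simp
    rw [hdiv, hzpow, Complex.reCLM_apply, Complex.re_ofReal_mul, Complex.re_ofReal_mul,
      Complex.exp_ofReal_mul_I_re]
    push_cast
    ring
  have hne : (1 : ℂ) - z ≠ 0 := by
    intro h
    rw [← sub_eq_zero.mp h] at hznorm
    simp at hznorm
  have hre : Complex.reCLM (-Complex.log (1 - z)) = -Real.log ‖(1:ℂ) - z‖ := by
    simp [Complex.log_re]
  have hnorm : ‖x - y‖ = b * ‖(1:ℂ) - z‖ := by
    have hxy : ‖x - y‖ = Real.sqrt ((b * Real.cos θ - s * Real.cos θy)^2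
        + (b * Real.sin θ - s * Real.sin θy)^2) := by
      rw [EuclideanSpace.norm_eq, Fin.sum_univ_two]
      simp [Real.norm_eq_abs, sq_abs, hx, hy]
    rw [hxy, Complex.norm_def,
      show b * Real.sqrt (Complex.normSq (1 - z)) = Real.sqrt (b^2 * Complex.normSq (1 - z)) by
        rw [Real.sqrt_mul (sq_nonneg b), Real.sqrt_sq hb.le]]
    congr 1
    have p1 := Real.sin_sq_add_cos_sq θ
    have p2 := Real.sin_sq_add_cos_sq θy
    have p3 := Real.sin_sq_add_cos_sq φ
    have lhs_eq : (b * Real.cos θ - s * Real.cos θy)^2 + (b * Real.sin θ - s * Real.sin θy)^2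
        = b^2 + s^2 - 2*b*s*Real.cos φ := by
      rw [hφ, Real.cos_sub]
      linear_combination b^2 * p1 + s^2 * p2
    have rhs_eq : b^2 * Complex.normSq (1 - z) = b^2 + s^2 - 2*b*s*Real.cos φ := by
      rw [hz, Complex.exp_mul_I, Complex.normSq_apply]
      simp only [Complex.sub_re, Complex.sub_im, Complex.one_re, Complex.one_im,
        Complex.mul_re, Complex.mul_im, Complex.add_re, Complex.add_im, Complex.ofReal_re,
        Complex.ofReal_im, Complex.cos_ofReal_re, Complex.cos_ofReal_im,
        Complex.sin_ofReal_re, Complex.sin_ofReal_im, Complex.I_re, Complex.I_im,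
        Complex.mul_re, Complex.mul_im]
      field_simp
      linear_combination (s^2) * p3
    rw [lhs_eq, rhs_eq]
  have hval : Real.log b - Real.log ‖x - y‖ = -Real.log ‖(1:ℂ) - z‖ := by
    rw [hnorm, Real.log_mul hb.ne'
      (by simpa using norm_ne_zero_iff.mpr hne)]
    simp
  rw [hval, ← hre]
  simp only [hterm] at h3
  exact h3
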